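/- Let d ≥ 1 be an integer and 0 < β ≤ 1. Let f ∈ L^{1+β}(ℝ^d), g₁ ∈ L^{(1+β)/β}(ℝ^d), g₂ ∈ L¹(ℝ^d) be nonnegative measurable functions. Then ‖ f * ( g₁ · (f * g₂) ) ‖_{L^{1+β}(ℝ^d)} ≤ ‖f‖_{L^{1+β}}² · ‖g₁‖_{L^{(1+β)/β}} · ‖g₂‖_{L¹}. -/

import Mathlib

open MeasureTheory ENNReal

section YoungAux

lemma young_p_one (d : ℕ) (p q : ℝ) (hpq : p.HolderConjugate q)
    (φ ψ : EuclideanSpace ℝ (Fin d) → ℝ≥0∞) (hφ : Measurable φ) (hψ : Measurable ψ) :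
    (∫⁻ x, (∫⁻ y, φ (x - y) * ψ y) ^ p) ^ (1 / p) ≤
      (∫⁻ x, φ x ^ p) ^ (1 / p) * ∫⁻ y, ψ y := by
  have hp0 : 0 < p := hpq.pos
  have hq0 : 0 < q := hpq.symm.pos
  have hsum : 1 / p + 1 / q = (1 : ℝ) := by
    rw [one_div, one_div, hpq.inv_add_inv_eq_inv, inv_one]
  set A := ∫⁻ x, φ x ^ p with hA
  set B := ∫⁻ y, ψ y with hB
  -- pointwise Hölder
  have step1 : ∀ x, (∫⁻ y, φ (x - y) * ψ y) ≤
      (∫⁻ y, φ (x - y) ^ p * ψ y) ^ (1 / p) * B ^ (1 / q) := by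
    intro x
    have hrw : ∀ y, φ (x - y) * ψ y =
        ((fun y => (φ (x - y) ^ p * ψ y) ^ (1 / p)) * fun y => ψ y ^ (1 / q)) y := by
      intro y
      simp only [Pi.mul_apply]
      rw [mul_rpow_of_nonneg _ _ (by positivity), ← ENNReal.rpow_mul, mul_one_div,
        div_self hp0.ne', ENNReal.rpow_one, mul_assoc,
        ← ENNReal.rpow_add_of_nonneg _ _ (by positivity) (by positivity), hsum,
        ENNReal.rpow_one]
    calc (∫⁻ y, φ (x - y) * ψ y)
        = ∫⁻ y, ((fun y => (φ (x - y) ^ p * ψ y) ^ (1 / p)) * fun y => ψ y ^ (1 / q)) y := by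
          exact lintegral_congr hrw
      _ ≤ (∫⁻ y, ((φ (x - y) ^ p * ψ y) ^ (1 / p)) ^ p) ^ (1 / p) *
            (∫⁻ y, (ψ y ^ (1 / q)) ^ q) ^ (1 / q) := by
          refine ENNReal.lintegral_mul_le_Lp_mul_Lq volume hpq ?_ ?_
          · exact (((hφ.comp (measurable_const.sub measurable_id)).pow_const p).mul
              hψ).pow_const _ |>.aemeasurable
          · exact (hψ.pow_const _).aemeasurable
      _ = (∫⁻ y, φ (x - y) ^ p * ψ y) ^ (1 / p) * B ^ (1 / q) := by
          congr 1
          · refine congrArg (· ^ (1/p)) (lintegral_congr fun y => ?_)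
            rw [← ENNReal.rpow_mul, one_div_mul_cancel hp0.ne', ENNReal.rpow_one]
          · refine congrArg (· ^ (1/q)) (lintegral_congr fun y => ?_)
            rw [← ENNReal.rpow_mul, one_div_mul_cancel hq0.ne', ENNReal.rpow_one]
  -- integrate the p-th power
  have hG : Measurable fun x => ∫⁻ y, φ (x - y) ^ p * ψ y := by
    apply Measurable.lintegral_prod_right'
      (f := Function.uncurry fun x y => φ (x - y) ^ p * ψ y)
    exact ((hφ.comp measurable_sub).pow_const p).mul (hψ.comp measurable_snd)
  have step2 : (∫⁻ x, (∫⁻ y, φ (x - y) * ψ y) ^ p) ≤ A * B * B ^ (p / q) := by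
    calc (∫⁻ x, (∫⁻ y, φ (x - y) * ψ y) ^ p)
        ≤ ∫⁻ x, (∫⁻ y, φ (x - y) ^ p * ψ y) * B ^ (p / q) := by
          refine lintegral_mono fun x => ?_
          calc (∫⁻ y, φ (x - y) * ψ y) ^ p
              ≤ ((∫⁻ y, φ (x - y) ^ p * ψ y) ^ (1 / p) * B ^ (1 / q)) ^ p :=
                ENNReal.rpow_le_rpow (step1 x) hp0.le
            _ = (∫⁻ y, φ (x - y) ^ p * ψ y) * B ^ (p / q) := by
                rw [mul_rpow_of_nonneg _ _ hp0.le, ← ENNReal.rpow_mul, ← ENNReal.rpow_mul,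
                  one_div_mul_cancel hp0.ne', ENNReal.rpow_one, one_div, inv_mul_eq_div]
      _ = (∫⁻ x, ∫⁻ y, φ (x - y) ^ p * ψ y) * B ^ (p / q) :=
          lintegral_mul_const'' _ hG.aemeasurable
      _ = (∫⁻ y, ∫⁻ x, φ (x - y) ^ p * ψ y) * B ^ (p / q) := by
          rw [lintegral_lintegral_swap]
          exact (((hφ.comp measurable_sub).pow_const p).mul (hψ.comp measurable_snd)).aemeasurable
      _ = A * B * B ^ (p / q) := by
          congr 1
          calc (∫⁻ y, ∫⁻ x, φ (x - y) ^ p * ψ y)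
              = ∫⁻ y, (∫⁻ x, φ (x - y) ^ p) * ψ y := by
                refine lintegral_congr fun y => lintegral_mul_const'' _ ?_
                exact ((hφ.comp (measurable_id.sub measurable_const)).pow_const p).aemeasurable
            _ = ∫⁻ y, A * ψ y := by
                refine lintegral_congr fun y => ?_
                congr 1
                exact (measurePreserving_sub_right volume y).lintegral_comp
                  (hφ.pow_const p)
            _ = A * B := lintegral_const_mul'' A hψ.aemeasurable
  calc (∫⁻ x, (∫⁻ y, φ (x - y) * ψ y) ^ p) ^ (1 / p)
      ≤ (A * B * B ^ (p / q)) ^ (1 / p) := ENNReal.rpow_le_rpow step2 (by positivity)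
    _ = A ^ (1 / p) * B := by
        rw [mul_rpow_of_nonneg _ _ (by positivity), mul_rpow_of_nonneg _ _ (by positivity),
          ← ENNReal.rpow_mul, mul_assoc,
          ← ENNReal.rpow_add_of_nonneg _ _ (by positivity) (by positivity)]
        have h1 : 1 / p + p / q * (1 / p) = (1 : ℝ) := by
          have : p / q * (1 / p) = 1 / q := by field_simp
          rw [this, hsum]
        rw [h1, ENNReal.rpow_one]

lemma conv_measurable' {d : ℕ} (u w : EuclideanSpace ℝ (Fin d) → ℝ) (hu : Measurable u)
    (hw : Measurable w) :
    Measurable (fun x => ∫ y, u (x - y) * w y) := by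
  have h : StronglyMeasurable (Function.uncurry fun x y : EuclideanSpace ℝ (Fin d) =>
      u (x - y) * w y) :=
    ((hu.comp measurable_sub).mul (hw.comp measurable_snd)).stronglyMeasurable
  exact h.integral_prod_right'.measurable

lemma ofReal_conv_le {d : ℕ} (u w : EuclideanSpace ℝ (Fin d) → ℝ) (hu0 : ∀ x, 0 ≤ u x)
    (hw0 : ∀ x, 0 ≤ w x) (x : EuclideanSpace ℝ (Fin d)) :
    ENNReal.ofReal (∫ y, u (x - y) * w y) ≤
      ∫⁻ y, ENNReal.ofReal (u (x - y)) * ENNReal.ofReal (w y) := by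
  by_cases hI : Integrable (fun y => u (x - y) * w y) volume
  · rw [ofReal_integral_eq_lintegral_ofReal hI
      (Filter.Eventually.of_forall fun y => mul_nonneg (hu0 _) (hw0 _))]
    exact le_of_eq (lintegral_congr fun y => ENNReal.ofReal_mul (hu0 _))
  · rw [integral_undef hI]
    simp

lemma eLpNorm_ofReal_eq {d : ℕ} (u : EuclideanSpace ℝ (Fin d) → ℝ) (hu0 : ∀ x, 0 ≤ u x)
    (p : ℝ) (hp0 : 0 < p) :
    eLpNorm u (ENNReal.ofReal p) volume =
      (∫⁻ x, ENNReal.ofReal (u x) ^ p) ^ (1 / p) := by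
  rw [eLpNorm_eq_lintegral_rpow_enorm_toReal (by simp [hp0, hp0.ne']) (by simp)]
  rw [ENNReal.toReal_ofReal hp0.le]
  congr 1
  refine lintegral_congr fun x => ?_
  rw [← Real.enorm_eq_ofReal (hu0 x)]

end YoungAux


/-- Convolution of two real functions on `ℝ^d` (w.r.t. Lebesgue measure). -/
noncomputable def conv (d : ℕ) (f g : EuclideanSpace ℝ (Fin d) → ℝ)
    (x : EuclideanSpace ℝ (Fin d)) : ℝ :=
  ∫ y, f (x - y) * g y

/-- The Young–Hölder bound for the term `J₁(T)`:
`‖f * (g₁ · (f * g₂))‖_{1+β} ≤ ‖f‖_{1+β}² ‖g₁‖_{(1+β)/β} ‖g₂‖₁`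
for nonnegative `f ∈ L^{1+β}`, `g₁ ∈ L^{(1+β)/β}`, `g₂ ∈ L¹`. -/
theorem stmt15 (d : ℕ) (hd : 1 ≤ d) (β : ℝ) (hβ0 : 0 < β) (hβ1 : β ≤ 1)
    (f g₁ g₂ : EuclideanSpace ℝ (Fin d) → ℝ)
    (hf0 : ∀ x, 0 ≤ f x) (hg₁0 : ∀ x, 0 ≤ g₁ x) (hg₂0 : ∀ x, 0 ≤ g₂ x)
    (hfm : Measurable f) (hg₁m : Measurable g₁) (hg₂m : Measurable g₂)
    (hf : MemLp f (ENNReal.ofReal (1 + β)) volume)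
    (hg₁ : MemLp g₁ (ENNReal.ofReal ((1 + β) / β)) volume)
    (hg₂ : MemLp g₂ 1 volume) :
    eLpNorm (conv d f (fun x => g₁ x * conv d f g₂ x)) (ENNReal.ofReal (1 + β)) volume ≤
      (eLpNorm f (ENNReal.ofReal (1 + β)) volume) ^ 2 *
        eLpNorm g₁ (ENNReal.ofReal ((1 + β) / β)) volume * eLpNorm g₂ 1 volume := by
  set p : ℝ := 1 + β with hp
  set q : ℝ := (1 + β) / β with hq
  have hp1 : 1 < p := by simp [hp]; linarith
  have hp0 : 0 < p := by linarith
  have hq0 : 0 < q := by positivity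
  have hpq : p.HolderConjugate q := by
    rw [Real.holderConjugate_iff]
    constructor
    · exact hp1
    · rw [hp, hq]
      field_simp
  -- ennreal versions
  set Φ : EuclideanSpace ℝ (Fin d) → ℝ≥0∞ := fun x => ENNReal.ofReal (f x) with hΦ
  set Ψ₂ : EuclideanSpace ℝ (Fin d) → ℝ≥0∞ := fun x => ENNReal.ofReal (g₂ x) with hΨ₂
  set Γ : EuclideanSpace ℝ (Fin d) → ℝ≥0∞ := fun x => ENNReal.ofReal (g₁ x) with hΓ
  have hΦm : Measurable Φ := hfm.ennreal_ofReal
  have hΨ₂m : Measurable Ψ₂ := hg₂m.ennreal_ofReal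
  have hΓm : Measurable Γ := hg₁m.ennreal_ofReal
  -- real inner convolution and its properties
  have hvfm : Measurable (conv d f g₂) := conv_measurable' f g₂ hfm hg₂m
  have hvf0 : ∀ x, 0 ≤ conv d f g₂ x := fun x =>
    integral_nonneg fun y => mul_nonneg (hf0 _) (hg₂0 _)
  set h : EuclideanSpace ℝ (Fin d) → ℝ := fun x => g₁ x * conv d f g₂ x with hh
  have hh0 : ∀ x, 0 ≤ h x := fun x => mul_nonneg (hg₁0 _) (hvf0 _)
  have hhm : Measurable h := hg₁m.mul hvfm
  set H : EuclideanSpace ℝ (Fin d) → ℝ≥0∞ := fun x => ENNReal.ofReal (h x) with hH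
  have hHm : Measurable H := hhm.ennreal_ofReal
  have hc0 : ∀ x, 0 ≤ conv d f h x := fun x =>
    integral_nonneg fun y => mul_nonneg (hf0 _) (hh0 _)
  have hcm : Measurable (conv d f h) := conv_measurable' f h hfm hhm
  -- norms
  set Nf : ℝ≥0∞ := eLpNorm f (ENNReal.ofReal p) volume with hNf
  set Ng₁ : ℝ≥0∞ := eLpNorm g₁ (ENNReal.ofReal q) volume with hNg₁
  set Ng₂ : ℝ≥0∞ := eLpNorm g₂ 1 volume with hNg₂
  have hNfA : Nf = (∫⁻ x, Φ x ^ p) ^ (1 / p) := eLpNorm_ofReal_eq f hf0 p hp0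
  have hNg₁A : Ng₁ = (∫⁻ x, Γ x ^ q) ^ (1 / q) := eLpNorm_ofReal_eq g₁ hg₁0 q hq0
  have hNg₂A : Ng₂ = ∫⁻ x, Ψ₂ x := by
    rw [hNg₂, eLpNorm_one_eq_lintegral_enorm]
    exact lintegral_congr fun x => Real.enorm_eq_ofReal (hg₂0 x)
  -- Step A: bound on the inner convolution (in L^p)
  have stepA : (∫⁻ x, (ENNReal.ofReal (conv d f g₂ x)) ^ p) ^ (1 / p) ≤ Nf * Ng₂ := by
    calc (∫⁻ x, (ENNReal.ofReal (conv d f g₂ x)) ^ p) ^ (1 / p)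
        ≤ (∫⁻ x, (∫⁻ y, Φ (x - y) * Ψ₂ y) ^ p) ^ (1 / p) := by
          refine ENNReal.rpow_le_rpow (lintegral_mono fun x => ?_) (by positivity)
          exact ENNReal.rpow_le_rpow (ofReal_conv_le f g₂ hf0 hg₂0 x) hp0.le
      _ ≤ (∫⁻ x, Φ x ^ p) ^ (1 / p) * ∫⁻ y, Ψ₂ y :=
          young_p_one d p q hpq Φ Ψ₂ hΦm hΨ₂m
      _ = Nf * Ng₂ := by rw [hNfA, hNg₂A]
  -- Step B: L¹ bound on h
  have stepB : (∫⁻ y, H y) ≤ Ng₁ * (Nf * Ng₂) := by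
    calc (∫⁻ y, H y) = ∫⁻ y, Γ y * ENNReal.ofReal (conv d f g₂ y) :=
          lintegral_congr fun y => ENNReal.ofReal_mul (hg₁0 y)
      _ = ∫⁻ y, ((fun y => Γ y) * fun y => ENNReal.ofReal (conv d f g₂ y)) y := rfl
      _ ≤ (∫⁻ y, Γ y ^ q) ^ (1 / q) *
            (∫⁻ y, (ENNReal.ofReal (conv d f g₂ y)) ^ p) ^ (1 / p) :=
          ENNReal.lintegral_mul_le_Lp_mul_Lq volume hpq.symm hΓm.aemeasurable
            hvfm.ennreal_ofReal.aemeasurable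
      _ ≤ Ng₁ * (Nf * Ng₂) := by
          rw [← hNg₁A]
          exact mul_le_mul' le_rfl stepA
  -- Step C: main bound
  calc eLpNorm (conv d f h) (ENNReal.ofReal p) volume
      = (∫⁻ x, (ENNReal.ofReal (conv d f h x)) ^ p) ^ (1 / p) :=
        eLpNorm_ofReal_eq _ hc0 p hp0
    _ ≤ (∫⁻ x, (∫⁻ y, Φ (x - y) * H y) ^ p) ^ (1 / p) := by
        refine ENNReal.rpow_le_rpow (lintegral_mono fun x => ?_) (by positivity)
        exact ENNReal.rpow_le_rpow (ofReal_conv_le f h hf0 hh0 x) hp0.le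
    _ ≤ (∫⁻ x, Φ x ^ p) ^ (1 / p) * ∫⁻ y, H y := young_p_one d p q hpq Φ H hΦm hHm
    _ ≤ Nf * (Ng₁ * (Nf * Ng₂)) := by
        rw [← hNfA]
        exact mul_le_mul' le_rfl stepB
    _ = Nf ^ 2 * Ng₁ * Ng₂ := by ring
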